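/- Let G be a bridgeless graph with d(G)=4 and let uv be an edge with l_G(uv) = g*(G) ≥ 6. Then: (i) for every w ∈ M', the set N(w) ∩ (S_{3,3} ∪ K ∪ L) is contained in S_{3,3} (so w has a neighbor in S_{3,3} and no neighbor in K ∪ L); and (ii) for every w ∈ M with no edge joining w to S_{3,3}, one has N(w) ∩ K ≠ ∅ and N(w) ∩ L ≠ ∅. -/

import Mathlib

/-- A multigraph: vertices `V`, edges `E`, each edge has two distinct endpoints. -/
structure Multigraph (V : Type*) (E : Type*) where
  ends : E → Sym2 V
  loopless : ∀ e, ¬ (ends e).IsDiag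

namespace Multigraph

variable {V E : Type*}

/-- Adjacency in a multigraph: some edge joins `x` and `y`. -/
def Adjm (G : Multigraph V E) (x y : V) : Prop := ∃ e, G.ends e = s(x, y)

/-- The underlying simple graph of a multigraph. -/
def toSimple (G : Multigraph V E) : SimpleGraph V where
  Adj x y := x ≠ y ∧ G.Adjm x y
  symm := by
    constructor
    rintro x y ⟨hne, e, he⟩
    exact ⟨hne.symm, e, he.trans (Sym2.eq_swap)⟩
  loopless := by constructor; rintro x ⟨hne, -⟩; exact hne rfl

/-- Distance between two vertices (length of a shortest path). -/
noncomputable def dist (G : Multigraph V E) (x y : V) : ℕ := G.toSimple.dist x y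

/-- The diameter of a multigraph. -/
noncomputable def diam (G : Multigraph V E) : ℕ := sSup {n | ∃ x y, G.dist x y = n}

/-- The multigraph obtained by deleting the edge `e₀`. -/
def deleteEdge (G : Multigraph V E) (e₀ : E) : Multigraph V {e : E // e ≠ e₀} where
  ends e := G.ends e.1
  loopless e := G.loopless e.1

/-- A (connected) multigraph is bridgeless if deleting any single edge leaves it connected. -/
def Bridgeless (G : Multigraph V E) : Prop :=
  ∀ e : E, ((G.deleteEdge e).toSimple).Connected

/-- Walks in a multigraph, recording the edges used. -/
inductive Walk (G : Multigraph V E) : V → V → Type _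
  | nil {v : V} : Walk G v v
  | cons {x y z : V} (e : E) (he : G.ends e = s(x, y)) (p : Walk G y z) : Walk G x z

namespace Walk

variable {G : Multigraph V E}

/-- The length (number of edges) of a walk. -/
def length : ∀ {x y : V}, G.Walk x y → ℕ
  | _, _, .nil => 0
  | _, _, .cons _ _ p => p.length + 1

/-- The list of edges of a walk. -/
def edges : ∀ {x y : V}, G.Walk x y → List E
  | _, _, .nil => []
  | _, _, .cons e _ p => e :: p.edges

/-- The list of vertices of a walk. -/
def support : ∀ {x y : V}, G.Walk x y → List V
  | x, _, .nil => [x]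
  | x, _, .cons _ _ p => x :: p.support

/-- A closed walk is a cycle if its edges are distinct and its vertices
(other than the repeated base point) are distinct. -/
def IsCycle {v : V} (p : G.Walk v v) : Prop :=
  p.edges.Nodup ∧ p.support.tail.Nodup ∧ 0 < p.length

end Walk

/-- The edge girth of `e`: the length of a shortest cycle containing `e`. -/
noncomputable def edgeGirth (G : Multigraph V E) (e : E) : ℕ :=
  sInf {n | ∃ (v : V) (p : G.Walk v v), p.IsCycle ∧ e ∈ p.edges ∧ p.length = n}

/-- The maximum edge girth `g*(G)`. -/
noncomputable def maxEdgeGirth (G : Multigraph V E) : ℕ :=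
  sSup (Set.range fun e => G.edgeGirth e)

/-- An orientation of a multigraph: each edge is assigned a direction. -/
structure Orientation (G : Multigraph V E) where
  dir : E → V × V
  compat : ∀ e, s((dir e).1, (dir e).2) = G.ends e

/-- Arcs of an orientation. -/
def Orientation.DAdj {G : Multigraph V E} (o : G.Orientation) (x y : V) : Prop :=
  ∃ e, o.dir e = (x, y)

/-- Directed distance in an orientation (`⊤` if unreachable). -/
noncomputable def Orientation.ddist {G : Multigraph V E} (o : G.Orientation) (x y : V) : ℕ∞ :=
  sInf {n : ℕ∞ | ∃ l : List V, List.Chain o.DAdj x l ∧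
    (x :: l).getLast (List.cons_ne_nil x l) = y ∧ (l.length : ℕ∞) = n}

/-- An orientation is strong if every vertex is reachable from every vertex by a directed path. -/
def Orientation.IsStrong {G : Multigraph V E} (o : G.Orientation) : Prop :=
  ∀ x y : V, o.ddist x y ≠ ⊤

/-- The diameter of an orientation. -/
noncomputable def Orientation.odiam {G : Multigraph V E} (o : G.Orientation) : ℕ∞ :=
  ⨆ (x : V) (y : V), o.ddist x y

end Multigraph

namespace Multigraph

variable {V E : Type*}

/-- `S G u v i j` is the set of vertices at distance `i` from `u` and `j` from `v`. -/
noncomputable def S (G : Multigraph V E) (u v : V) (i j : ℕ) : Set V :=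
  {w | G.dist w u = i ∧ G.dist w v = j}

/-- The neighbourhood of a vertex. -/
def nbhd (G : Multigraph V E) (w : V) : Set V := {x | G.Adjm w x}

end Multigraph

namespace Multigraph

variable {V E : Type*} (G : Multigraph V E) (u v : V)

/-- `A' = {w ∈ S₁₂ : N(w) ⊆ S₁₂ ∪ {u}}`. -/
noncomputable def setA' : Set V := {w ∈ G.S u v 1 2 | G.nbhd w ⊆ G.S u v 1 2 ∪ {u}}
/-- `A = S₁₂ − A'`. -/
noncomputable def setA : Set V := G.S u v 1 2 \ G.setA' u v
/-- `B' = {w ∈ S₂₁ : N(w) ⊆ S₂₁ ∪ {v}}`. -/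
noncomputable def setB' : Set V := {w ∈ G.S u v 2 1 | G.nbhd w ⊆ G.S u v 2 1 ∪ {v}}
/-- `B = S₂₁ − B'`. -/
noncomputable def setB : Set V := G.S u v 2 1 \ G.setB' u v
/-- `I' = {w ∈ S₂₃ : N(w) ⊆ S₂₃ ∪ A}`. -/
noncomputable def setI' : Set V := {w ∈ G.S u v 2 3 | G.nbhd w ⊆ G.S u v 2 3 ∪ G.setA u v}
/-- `I = S₂₃ − I'`. -/
noncomputable def setI : Set V := G.S u v 2 3 \ G.setI' u v
/-- `J' = {w ∈ S₃₂ : N(w) ⊆ S₃₂ ∪ B}`. -/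
noncomputable def setJ' : Set V := {w ∈ G.S u v 3 2 | G.nbhd w ⊆ G.S u v 3 2 ∪ G.setB u v}
/-- `J = S₃₂ − J'`. -/
noncomputable def setJ : Set V := G.S u v 3 2 \ G.setJ' u v
/-- `K' = {w ∈ S₃₄ : N(w) ⊆ S₃₄ ∪ I}`. -/
noncomputable def setK' : Set V := {w ∈ G.S u v 3 4 | G.nbhd w ⊆ G.S u v 3 4 ∪ G.setI u v}
/-- `K = S₃₄ − K'`. -/
noncomputable def setK : Set V := G.S u v 3 4 \ G.setK' u v
/-- `L' = {w ∈ S₄₃ : N(w) ⊆ S₄₃ ∪ J}`. -/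
noncomputable def setL' : Set V := {w ∈ G.S u v 4 3 | G.nbhd w ⊆ G.S u v 4 3 ∪ G.setJ u v}
/-- `L = S₄₃ − L'`. -/
noncomputable def setL : Set V := G.S u v 4 3 \ G.setL' u v
/-- `M' = {w ∈ S₄₄ : exactly one edge of G joins w to S₃₃ ∪ K ∪ L}`. -/
noncomputable def setM' : Set V :=
  {w ∈ G.S u v 4 4 |
    ∃! e : E, ∃ x ∈ G.S u v 3 3 ∪ G.setK u v ∪ G.setL u v, G.ends e = s(w, x)}
/-- `M = S₄₄ − M'`. -/
noncomputable def setM : Set V := G.S u v 4 4 \ G.setM' u v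

end Multigraph

/-- **Proposition 1.** Let `G` be a bridgeless graph with `d(G) = 4` and let
`uv` be an edge with `l_G(uv) = g*(G) ≥ 6`. Then: (i) for every `w ∈ M'`, the set
`N(w) ∩ (S₃₃ ∪ K ∪ L)` is contained in `S₃₃` (so `w` has a neighbour in `S₃₃` and no
neighbour in `K ∪ L`); and (ii) every `w ∈ M` with no edge joining `w` to `S₃₃` has a
neighbour in `K` and a neighbour in `L`. -/
theorem stmt12 {V E : Type*} [Fintype V] [Fintype E] (G : Multigraph V E)
    (hconn : G.toSimple.Connected) (hbridgeless : G.Bridgeless) (hdiam : G.diam = 4)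
    (u v : V) (e : E) (he : G.ends e = s(u, v))
    (hmax : G.edgeGirth e = G.maxEdgeGirth) (h6 : 6 ≤ G.maxEdgeGirth) :
    (∀ w ∈ G.setM' u v,
      G.nbhd w ∩ (G.S u v 3 3 ∪ G.setK u v ∪ G.setL u v) ⊆ G.S u v 3 3 ∧
      (G.nbhd w ∩ G.S u v 3 3).Nonempty) ∧
    (∀ w ∈ G.setM u v, G.nbhd w ∩ G.S u v 3 3 = ∅ →
      (G.nbhd w ∩ G.setK u v).Nonempty ∧ (G.nbhd w ∩ G.setL u v).Nonempty) := by

  classical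
  have hsymm : ∀ {x y : V}, G.Adjm x y → G.Adjm y x := by
    rintro x y ⟨f, hf⟩
    exact ⟨f, hf.trans Sym2.eq_swap⟩
  -- All distances are at most 4.
  have hbdd : ∀ x y : V, G.dist x y ≤ 4 := by
    intro x y
    have hset : {n | ∃ a b : V, G.dist a b = n} =
        Set.range (fun p : V × V => G.dist p.1 p.2) := by
      ext n
      constructor
      · rintro ⟨a, b, h⟩; exact ⟨(a, b), h⟩
      · rintro ⟨⟨a, b⟩, h⟩; exact ⟨a, b, h⟩
    have hfin : {n | ∃ a b : V, G.dist a b = n}.Finite := by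
      rw [hset]; exact Set.finite_range _
    have hle : G.dist x y ≤ G.diam := le_csSup hfin.bddAbove ⟨x, y, rfl⟩
    rwa [hdiam] at hle
  have htri : ∀ x y z : V, G.dist x z ≤ G.dist x y + G.dist y z := fun x y z =>
    hconn.dist_triangle
  have hadj1 : ∀ x y : V, x ≠ y → G.Adjm x y → G.dist x y = 1 := fun x y hne h =>
    SimpleGraph.dist_eq_one_iff_adj.mpr ⟨hne, h⟩
  -- From a vertex at distance 4 from t there is a neighbour at distance 3 from t.
  have hstep : ∀ w t : V, G.dist w t = 4 → ∃ p, G.Adjm w p ∧ G.dist p t = 3 := by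
    intro w t hd
    have hd' : G.toSimple.dist w t = 4 := hd
    obtain ⟨pw, hpw⟩ := SimpleGraph.exists_walk_of_dist_ne_zero
      (by rw [hd']; omega : G.toSimple.dist w t ≠ 0)
    cases pw with
    | nil =>
      rw [SimpleGraph.Walk.length_nil] at hpw; omega
    | @cons _ b _ h q =>
      refine ⟨b, h.2, ?_⟩
      have h1 : G.toSimple.dist b t ≤ q.length := SimpleGraph.dist_le q
      have h2 : q.length + 1 = G.toSimple.dist w t := by
        simpa [SimpleGraph.Walk.length_cons] using hpw
      have h3 : G.toSimple.dist w t ≤ G.toSimple.dist w b + G.toSimple.dist b t :=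
        hconn.dist_triangle
      have h4 : G.toSimple.dist w b = 1 :=
        SimpleGraph.dist_eq_one_iff_adj.mpr h
      show G.toSimple.dist b t = 3
      omega
  -- Every vertex of S₄₄ has a neighbour in S₃₃ ∪ K.
  have keyK : ∀ w : V, G.dist w u = 4 → G.dist w v = 4 →
      ∃ p, G.Adjm w p ∧ p ∈ G.S u v 3 3 ∪ G.setK u v := by
    intro w h4u h4v
    obtain ⟨p, hadj, hp3⟩ := hstep w u h4u
    have hwp : G.dist w p = 1 := by
      refine hadj1 w p ?_ hadj
      intro hEq; rw [hEq] at h4u; omega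
    have hpv_ge : 3 ≤ G.dist p v := by have := htri w p v; omega
    have hpv_le := hbdd p v
    refine ⟨p, hadj, ?_⟩
    have hcase : G.dist p v = 3 ∨ G.dist p v = 4 := by omega
    rcases hcase with h3 | h4
    · exact Or.inl ⟨hp3, h3⟩
    · refine Or.inr ⟨⟨hp3, h4⟩, ?_⟩
      rintro ⟨-, hsub⟩
      have hw : w ∈ G.S u v 3 4 ∪ G.setI u v := hsub (hsymm hadj)
      rcases hw with hw | hw
      · obtain ⟨h1, -⟩ := hw; omega
      · obtain ⟨⟨h1, -⟩, -⟩ := hw; omega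
  -- Every vertex of S₄₄ has a neighbour in S₃₃ ∪ L.
  have keyL : ∀ w : V, G.dist w u = 4 → G.dist w v = 4 →
      ∃ q, G.Adjm w q ∧ q ∈ G.S u v 3 3 ∪ G.setL u v := by
    intro w h4u h4v
    obtain ⟨p, hadj, hp3⟩ := hstep w v h4v
    have hwp : G.dist w p = 1 := by
      refine hadj1 w p ?_ hadj
      intro hEq; rw [hEq] at h4v; omega
    have hpu_ge : 3 ≤ G.dist p u := by have := htri w p u; omega
    have hpu_le := hbdd p u
    refine ⟨p, hadj, ?_⟩
    have hcase : G.dist p u = 3 ∨ G.dist p u = 4 := by omega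
    rcases hcase with h3 | h4
    · exact Or.inl ⟨h3, hp3⟩
    · refine Or.inr ⟨⟨h4, hp3⟩, ?_⟩
      rintro ⟨-, hsub⟩
      have hw : w ∈ G.S u v 4 3 ∪ G.setJ u v := hsub (hsymm hadj)
      rcases hw with hw | hw
      · obtain ⟨-, h2⟩ := hw; omega
      · obtain ⟨⟨-, h2⟩, -⟩ := hw; omega
  constructor
  · -- Part (i)
    rintro w ⟨⟨h4u, h4v⟩, e₀, he₀, huniq⟩
    obtain ⟨p, hp, hpmem⟩ := keyK w h4u h4v
    obtain ⟨q, hq, hqmem⟩ := keyL w h4u h4v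
    obtain ⟨ep, hep⟩ := hp
    obtain ⟨eq', heq'⟩ := hq
    have hpKL : p ∈ G.S u v 3 3 ∪ G.setK u v ∪ G.setL u v :=
      Set.mem_union_left _ hpmem
    have hqKL : q ∈ G.S u v 3 3 ∪ G.setK u v ∪ G.setL u v := by
      rcases hqmem with h | h
      · exact Set.mem_union_left _ (Set.mem_union_left _ h)
      · exact Set.mem_union_right _ h
    have hepe : ep = e₀ := huniq ep ⟨p, hpKL, hep⟩
    have heqe : eq' = e₀ := huniq eq' ⟨q, hqKL, heq'⟩
    have hpq : s(w, p) = s(w, q) := by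
      rw [← hep, ← heq', hepe, heqe]
    have hqv : G.dist q v = 3 := by
      rcases hqmem with h | h
      · exact h.2
      · exact h.1.2
    have hwq : w ≠ q := by
      intro h; rw [h] at h4v; omega
    have hpeq : p = q := by
      rcases Sym2.eq_iff.mp hpq with ⟨-, h⟩ | ⟨h1, -⟩
      · exact h
      · exact absurd h1 hwq
    have hpS : p ∈ G.S u v 3 3 := by
      rcases hpmem with h | h
      · exact h
      · exfalso
        have h4 : G.dist p v = 4 := h.1.2
        rw [hpeq] at h4; omega
    refine ⟨?_, ⟨p, ⟨ep, hep⟩, hpS⟩⟩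
    rintro x ⟨hxn, hxKL⟩
    obtain ⟨f, hf⟩ := hxn
    have hwx : w ≠ x := by
      rintro rfl
      rcases hxKL with (h | h) | h
      · obtain ⟨h1, -⟩ := h; omega
      · obtain ⟨⟨h1, -⟩, -⟩ := h; omega
      · obtain ⟨⟨-, h2⟩, -⟩ := h; omega
    have hfe : f = e₀ := huniq f ⟨x, hxKL, hf⟩
    have hxp : s(w, x) = s(w, p) := by rw [← hf, ← hep, hfe, hepe]
    rcases Sym2.eq_iff.mp hxp with ⟨-, h⟩ | ⟨-, h2⟩
    · rw [h]; exact hpS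
    · exact absurd h2.symm hwx
  · -- Part (ii)
    rintro w ⟨⟨h4u, h4v⟩, -⟩ hempty
    obtain ⟨p, hp, hpmem⟩ := keyK w h4u h4v
    obtain ⟨q, hq, hqmem⟩ := keyL w h4u h4v
    constructor
    · rcases hpmem with h | h
      · exact absurd hempty (by
          rw [Set.eq_empty_iff_forall_notMem]
          push_neg
          exact ⟨p, hp, h⟩)
      · exact ⟨p, hp, h⟩
    · rcases hqmem with h | h
      · exact absurd hempty (by
          rw [Set.eq_empty_iff_forall_notMem]
          push_neg
          exact ⟨q, hq, h⟩)
      · exact ⟨q, hq, h⟩
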